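/- Let a ∈ ℝ and let B be a real number with m((x,∞))·(S(x) − S(a)) ≤ B for all x ≥ a. Then for every integer n ≥ 0, ∫_{(a,∞)} (J + K)ⁿ 1(x) dm(x) ≤ 4ⁿ · Bⁿ · m((a,∞)), where 1 denotes the constant function equal to 1 and (J+K)ⁿ the n-fold iterate of J + K. -/

import Mathlib

open MeasureTheory Set
open scoped ENNReal

/-- The operator `J`: `Jf(x) = (S(x) − S(a)) · ∫_{(x,∞)} f dm`. -/
noncomputable def Jop (S : ℝ → ℝ) (m : Measure ℝ) (a : ℝ) (f : ℝ → ℝ≥0∞) : ℝ → ℝ≥0∞ :=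
  fun x => ENNReal.ofReal (S x - S a) * ∫⁻ y in Ioi x, f y ∂m

/-- The operator `K`: `Kf(x) = ∫_{(a,x]} (S(y) − S(a)) f(y) dm(y)`. -/
noncomputable def Kop (S : ℝ → ℝ) (m : Measure ℝ) (a : ℝ) (f : ℝ → ℝ≥0∞) : ℝ → ℝ≥0∞ :=
  fun x => ∫⁻ y in Ioc a x, ENNReal.ofReal (S y - S a) * f y ∂m


private lemma iUnion_Iic_sub (c : ℝ) : ⋃ n : ℕ, Iic (c - 1/(n+1)) = Iio c := by
  ext z
  simp only [mem_iUnion, mem_Iic, mem_Iio]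
  constructor
  · rintro ⟨n, hn⟩
    have : (0:ℝ) < 1/(n+1) := by positivity
    linarith
  · intro hz
    obtain ⟨n, hn⟩ := exists_nat_one_div_lt (show (0:ℝ) < c - z by linarith)
    exact ⟨n, by linarith⟩

private lemma iInter_Iio_add (c : ℝ) : ⋂ n : ℕ, Iio (c + 1/(n+1)) = Iic c := by
  ext z
  simp only [mem_iInter, mem_Iio, mem_Iic]
  constructor
  · intro h
    by_contra hz
    push_neg at hz
    obtain ⟨n, hn⟩ := exists_nat_one_div_lt (show (0:ℝ) < z - c by linarith)
    exact absurd (h n) (by push_neg; linarith)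
  · intro h n
    have : (0:ℝ) < 1/(n+1) := by positivity
    linarith

private lemma iUnion_Iic_nat : ⋃ n : ℕ, Iic ((n:ℝ)) = univ := by
  ext z
  simp only [mem_iUnion, mem_Iic, mem_univ, iff_true]
  obtain ⟨n, hn⟩ := exists_nat_gt z
  exact ⟨n, hn.le⟩

private lemma iInter_Iio_neg : ⋂ n : ℕ, Iio (-(n:ℝ)) = ∅ := by
  ext z
  simp only [mem_iInter, mem_Iio, mem_empty_iff_false, iff_false, not_forall, not_lt]
  obtain ⟨n, hn⟩ := exists_nat_gt (-z)
  exact ⟨n, by linarith⟩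

private lemma mono_Iic_sub (c : ℝ) : Monotone (fun n : ℕ => Iic (c - 1/(n+1))) := by
  intro i j hij
  apply Iic_subset_Iic.mpr
  have h1 : (1:ℝ)/(j+1) ≤ 1/(i+1) := by
    apply one_div_le_one_div_of_le
    · positivity
    · exact_mod_cast by omega
  linarith

private lemma anti_Iio_add (c : ℝ) : Antitone (fun n : ℕ => Iio (c + 1/(n+1))) := by
  intro i j hij
  apply Iio_subset_Iio
  have h1 : (1:ℝ)/(j+1) ≤ 1/(i+1) := by
    apply one_div_le_one_div_of_le
    · positivity
    · exact_mod_cast by omega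
  linarith

private lemma measA {ρ : Measure ℝ} [IsFiniteMeasure ρ] (t : ℝ≥0∞) :
    ρ {x | ρ (Iic x) < t} ≤ t := by
  set D := {x | ρ (Iic x) < t} with hD
  have hlow : ∀ ⦃x y⦄, x ≤ y → y ∈ D → x ∈ D := fun x y hxy hy =>
    lt_of_le_of_lt (measure_mono (Iic_subset_Iic.mpr hxy)) hy
  by_cases hne : D.Nonempty
  · by_cases hbdd : BddAbove D
    · set c := sSup D with hc
      have hsub : D ⊆ Iic c := fun x hx => le_csSup hbdd hx
      have hIio : Iio c ⊆ D := by
        intro x hx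
        obtain ⟨y, hyD, hxy⟩ := exists_lt_of_lt_csSup hne hx
        exact hlow hxy.le hyD
      by_cases hcD : c ∈ D
      · exact le_trans (measure_mono hsub) hcD.le
      · have hDeq : D = Iio c := by
          apply Subset.antisymm _ hIio
          intro x hx
          rcases lt_or_eq_of_le (mem_Iic.mp (hsub hx)) with h | h
          · exact mem_Iio.mpr h
          · subst h; exact absurd hx hcD
        rw [hDeq, ← iUnion_Iic_sub c,
          Directed.measure_iUnion ((mono_Iic_sub c).directed_le)]
        apply iSup_le
        intro n
        have hmem : c - 1/(n+1) ∈ D := hIio (by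
          simp only [mem_Iio]
          have : (0:ℝ) < 1/(n+1) := by positivity
          linarith)
        exact hmem.le
    · have hDuniv : D = univ := by
        rw [eq_univ_iff_forall]
        intro x
        obtain ⟨y, hyD, hxy⟩ := not_bddAbove_iff.mp hbdd x
        exact hlow hxy.le hyD
      have hmono : Monotone fun n : ℕ => Iic ((n:ℝ)) := fun i j hij =>
        Iic_subset_Iic.mpr (by exact_mod_cast hij)
      rw [hDuniv, ← iUnion_Iic_nat, Directed.measure_iUnion hmono.directed_le]
      apply iSup_le
      intro n
      exact (hDuniv ▸ (mem_univ (n:ℝ)) : (n:ℝ) ∈ D).le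
  · rw [not_nonempty_iff_eq_empty] at hne
    simp [hne]

private lemma measB {ρ : Measure ℝ} [IsFiniteMeasure ρ] {t : ℝ≥0∞} (ht : t ≤ ρ univ) :
    t ≤ ρ {x | ρ (Iio x) < t} := by
  set D := {x | ρ (Iio x) < t} with hD
  have hlow : ∀ ⦃x y⦄, x ≤ y → y ∈ D → x ∈ D := fun x y hxy hy =>
    lt_of_le_of_lt (measure_mono (Iio_subset_Iio hxy)) hy
  by_cases hne : D.Nonempty
  · by_cases hbdd : BddAbove D
    · set c := sSup D with hc
      have hIio : Iio c ⊆ D := by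
        intro x hx
        obtain ⟨y, hyD, hxy⟩ := exists_lt_of_lt_csSup hne hx
        exact hlow hxy.le hyD
      by_cases hcD : c ∈ D
      · have hIic : Iic c ⊆ D := fun x hx => hlow hx hcD
        refine le_trans ?_ (measure_mono hIic)
        rw [← iInter_Iio_add c,
          Directed.measure_iInter (fun n => measurableSet_Iio.nullMeasurableSet)
            ((anti_Iio_add c).directed_ge) ⟨0, measure_ne_top ρ _⟩]
        apply le_iInf
        intro n
        have hnotD : c + 1/(n+1) ∉ D := by
          intro hmem
          have h1 := le_csSup hbdd hmem
          have h2 : (0:ℝ) < 1/(n+1) := by positivity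
          linarith
        exact not_lt.mp hnotD
      · have h1 : t ≤ ρ (Iio c) := not_lt.mp hcD
        exact le_trans h1 (measure_mono hIio)
    · have hDuniv : D = univ := by
        rw [eq_univ_iff_forall]
        intro x
        obtain ⟨y, hyD, hxy⟩ := not_bddAbove_iff.mp hbdd x
        exact hlow hxy.le hyD
      rw [hDuniv]; exact ht
  · rw [not_nonempty_iff_eq_empty] at hne
    have hforall : ∀ x : ℝ, t ≤ ρ (Iio x) := by
      intro x
      by_contra h
      exact (eq_empty_iff_forall_notMem.mp hne x) (not_le.mp h)
    have h2 : t ≤ ⨅ n : ℕ, ρ (Iio (-(n:ℝ))) := le_iInf fun n => hforall _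
    have hanti : Antitone fun n : ℕ => Iio (-(n:ℝ)) := fun i j hij =>
      Iio_subset_Iio (neg_le_neg (by exact_mod_cast hij))
    rw [← Directed.measure_iInter (fun n => measurableSet_Iio.nullMeasurableSet)
      hanti.directed_ge ⟨0, measure_ne_top ρ _⟩, iInter_Iio_neg] at h2
    simp only [measure_empty, nonpos_iff_eq_zero] at h2
    simp [h2]

private lemma betaCalc {M' : ℝ} (hM' : 0 ≤ M') (j : ℕ) :
    ∫⁻ t in Ioi (0:ℝ), (ENNReal.ofReal M' - ENNReal.ofReal t) *
        ENNReal.ofReal (((j:ℝ)+1) * t^j) =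
      ENNReal.ofReal (M'^(j+2) / ((j:ℝ)+2)) := by
  rw [← Ioc_union_Ioi_eq_Ioi hM', lintegral_union measurableSet_Ioi
    Ioc_disjoint_Ioi_same]
  have h2 : ∫⁻ t in Ioi M', (ENNReal.ofReal M' - ENNReal.ofReal t) *
      ENNReal.ofReal (((j:ℝ)+1) * t^j) = 0 := by
    rw [setLIntegral_congr_fun_ae measurableSet_Ioi (ae_of_all _ (fun t (ht : M' < t) => ?_)),
      lintegral_zero]
    rw [tsub_eq_zero_of_le (ENNReal.ofReal_le_ofReal ht.le), zero_mul]
  rw [h2, add_zero]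
  have h1 : ∀ t ∈ Ioc (0:ℝ) M', (ENNReal.ofReal M' - ENNReal.ofReal t) *
      ENNReal.ofReal (((j:ℝ)+1) * t^j) = ENNReal.ofReal ((M' - t) * (((j:ℝ)+1) * t^j)) := by
    intro t ht
    rw [ENNReal.ofReal_mul (by linarith [ht.2] : (0:ℝ) ≤ M' - t),
      ENNReal.ofReal_sub _ ht.1.le]
  rw [setLIntegral_congr_fun_ae measurableSet_Ioc (ae_of_all _ h1)]
  have hint : IntegrableOn (fun t => (M' - t) * (((j:ℝ)+1) * t^j)) (Ioc 0 M') volume := by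
    apply Continuous.integrableOn_Ioc
    continuity
  rw [← ofReal_integral_eq_lintegral_ofReal hint]
  · congr 1
    rw [← intervalIntegral.integral_of_le hM']
    have : ∀ x, (M' - x) * (((j:ℝ)+1) * x^j) =
        ((j:ℝ)+1) * M' * x^j - ((j:ℝ)+1) * x^(j+1) := by intro x; ring
    rw [intervalIntegral.integral_congr (fun x _ => this x)]
    rw [intervalIntegral.integral_sub
      ((intervalIntegral.intervalIntegrable_pow j).const_mul _)
      ((intervalIntegral.intervalIntegrable_pow (j+1)).const_mul _),
      intervalIntegral.integral_const_mul, intervalIntegral.integral_const_mul,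
      integral_pow, integral_pow]
    have hj1 : ((j:ℝ)+1) ≠ 0 := by positivity
    have hj2 : ((j:ℝ)+2) ≠ 0 := by positivity
    field_simp
    push_cast
    ring
  · filter_upwards [ae_restrict_mem measurableSet_Ioc] with t ht
    have h1 := ht.1.le
    have h2 := ht.2
    apply mul_nonneg (by linarith)
    positivity

private lemma lemA (ρ : Measure ℝ) [IsFiniteMeasure ρ] (k : ℕ) :
    ρ univ ^ (k+1) ≤ ((k:ℝ≥0∞)+1) * ∫⁻ x, ρ (Iic x) ^ k ∂ρ := by
  cases k with
  | zero => simp [lintegral_one]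
  | succ j =>
    have hFmono : Monotone fun x : ℝ => ρ (Iic x) := fun x y hxy =>
      measure_mono (Iic_subset_Iic.mpr hxy)
    have hFmeas : Measurable fun x : ℝ => ρ (Iic x) := hFmono.measurable
    set f : ℝ → ℝ := fun x => (ρ (Iic x)).toReal with hf
    have hfmeas : Measurable f := hFmeas.ennreal_toReal
    set g : ℝ → ℝ := fun t => ((j:ℝ)+1) * t^j with hg
    have hgc : Continuous g := by continuity
    have layer := lintegral_comp_eq_lintegral_meas_le_mul ρ
      (ae_of_all _ fun x => ENNReal.toReal_nonneg) hfmeas.aemeasurable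
      (fun t _ => hgc.intervalIntegrable 0 t)
      (by
        filter_upwards [ae_restrict_mem measurableSet_Ioi] with t (ht : 0 < t)
        have := ht.le
        positivity)
    have hc : (((j+1 : ℕ)):ℝ≥0∞) + 1 = (j:ℝ≥0∞) + 2 := by push_cast; ring
    rw [hc]
    set M' : ℝ := (ρ univ).toReal with hM'
    have hM : ENNReal.ofReal M' = ρ univ := ENNReal.ofReal_toReal (measure_ne_top ρ univ)
    have hLHS : ∫⁻ x, ENNReal.ofReal (∫ t in (0:ℝ)..f x, g t) ∂ρ
        = ∫⁻ x, ρ (Iic x) ^ (j+1) ∂ρ := by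
      apply lintegral_congr
      intro x
      have hval : ∫ t in (0:ℝ)..f x, g t = f x ^ (j+1) := by
        rw [hg]
        simp only
        rw [intervalIntegral.integral_const_mul, integral_pow]
        have : ((j:ℝ)+1) ≠ 0 := by positivity
        field_simp
        simp
      rw [hval, ENNReal.ofReal_pow ENNReal.toReal_nonneg,
        ENNReal.ofReal_toReal (measure_ne_top ρ _)]
    have hbound : ∫⁻ t in Ioi (0:ℝ), (ENNReal.ofReal M' - ENNReal.ofReal t) *
        ENNReal.ofReal (g t)
        ≤ ∫⁻ t in Ioi (0:ℝ), ρ {a | t ≤ f a} * ENNReal.ofReal (g t) := by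
      apply lintegral_mono_ae
      filter_upwards [ae_restrict_mem measurableSet_Ioi] with t (ht : 0 < t)
      apply mul_le_mul_left
      have hset : {a : ℝ | t ≤ f a} = {x : ℝ | ρ (Iic x) < ENNReal.ofReal t}ᶜ := by
        ext x
        simp only [mem_setOf_eq, mem_compl_iff, not_lt]
        exact (ENNReal.ofReal_le_iff_le_toReal (measure_ne_top ρ _)).symm
      rw [hset, measure_compl (measurableSet_lt hFmeas measurable_const) (measure_ne_top _ _), hM]
      exact tsub_le_tsub_left (measA _) _
    have hcast : ((j:ℝ≥0∞) + 2) = ENNReal.ofReal ((j:ℝ)+2) := by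
      rw [ENNReal.ofReal_add (by positivity) (by norm_num)]
      simp [ENNReal.ofReal_natCast]
    calc ρ univ ^ (j+2) = ENNReal.ofReal (M' ^ (j+2)) := by
          rw [ENNReal.ofReal_pow ENNReal.toReal_nonneg, hM]
      _ = ((j:ℝ≥0∞) + 2) * ENNReal.ofReal (M'^(j+2) / ((j:ℝ)+2)) := by
          rw [hcast, ← ENNReal.ofReal_mul (by positivity)]
          congr 1
          have : ((j:ℝ)+2) ≠ 0 := by positivity
          field_simp
      _ = ((j:ℝ≥0∞) + 2) * ∫⁻ t in Ioi (0:ℝ),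
          (ENNReal.ofReal M' - ENNReal.ofReal t) * ENNReal.ofReal (g t) := by
          rw [betaCalc ENNReal.toReal_nonneg j]
      _ ≤ ((j:ℝ≥0∞) + 2) * ∫⁻ t in Ioi (0:ℝ), ρ {a | t ≤ f a} * ENNReal.ofReal (g t) :=
          mul_le_mul_right hbound _
      _ = ((j:ℝ≥0∞) + 2) * ∫⁻ x, ρ (Iic x) ^ (j+1) ∂ρ := by rw [← layer, hLHS]

private lemma lemB (ρ : Measure ℝ) [IsFiniteMeasure ρ] (k : ℕ) :
    ((k:ℝ≥0∞)+1) * ∫⁻ x, ρ (Iio x) ^ k ∂ρ ≤ ρ univ ^ (k+1) := by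
  cases k with
  | zero => simp [lintegral_one]
  | succ j =>
    have hGmono : Monotone fun x : ℝ => ρ (Iio x) := fun x y hxy =>
      measure_mono (Iio_subset_Iio hxy)
    have hGmeas : Measurable fun x : ℝ => ρ (Iio x) := hGmono.measurable
    set f : ℝ → ℝ := fun x => (ρ (Iio x)).toReal with hf
    have hfmeas : Measurable f := hGmeas.ennreal_toReal
    set g : ℝ → ℝ := fun t => ((j:ℝ)+1) * t^j with hg
    have hgc : Continuous g := by continuity
    have layer := lintegral_comp_eq_lintegral_meas_le_mul ρ
      (ae_of_all _ fun x => ENNReal.toReal_nonneg) hfmeas.aemeasurable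
      (fun t _ => hgc.intervalIntegrable 0 t)
      (by
        filter_upwards [ae_restrict_mem measurableSet_Ioi] with t (ht : 0 < t)
        have := ht.le
        positivity)
    have hc : (((j+1 : ℕ)):ℝ≥0∞) + 1 = (j:ℝ≥0∞) + 2 := by push_cast; ring
    rw [hc]
    set M' : ℝ := (ρ univ).toReal with hM'
    have hM : ENNReal.ofReal M' = ρ univ := ENNReal.ofReal_toReal (measure_ne_top ρ univ)
    have hLHS : ∫⁻ x, ENNReal.ofReal (∫ t in (0:ℝ)..f x, g t) ∂ρ
        = ∫⁻ x, ρ (Iio x) ^ (j+1) ∂ρ := by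
      apply lintegral_congr
      intro x
      have hval : ∫ t in (0:ℝ)..f x, g t = f x ^ (j+1) := by
        rw [hg]
        simp only
        rw [intervalIntegral.integral_const_mul, integral_pow]
        have : ((j:ℝ)+1) ≠ 0 := by positivity
        field_simp
        simp
      rw [hval, ENNReal.ofReal_pow ENNReal.toReal_nonneg,
        ENNReal.ofReal_toReal (measure_ne_top ρ _)]
    have hbound : ∫⁻ t in Ioi (0:ℝ), ρ {a | t ≤ f a} * ENNReal.ofReal (g t)
        ≤ ∫⁻ t in Ioi (0:ℝ), (ENNReal.ofReal M' - ENNReal.ofReal t) *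
          ENNReal.ofReal (g t) := by
      apply lintegral_mono_ae
      filter_upwards [ae_restrict_mem measurableSet_Ioi] with t (ht : 0 < t)
      apply mul_le_mul_left
      by_cases hcase : ENNReal.ofReal t ≤ ρ univ
      · have hset : {a : ℝ | t ≤ f a} = {x : ℝ | ρ (Iio x) < ENNReal.ofReal t}ᶜ := by
          ext x
          simp only [mem_setOf_eq, mem_compl_iff, not_lt]
          exact (ENNReal.ofReal_le_iff_le_toReal (measure_ne_top ρ _)).symm
        rw [hset, measure_compl (measurableSet_lt hGmeas measurable_const) (measure_ne_top _ _), hM]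
        exact tsub_le_tsub_left (measB hcase) _
      · have hset : {a : ℝ | t ≤ f a} = ∅ := by
          ext x
          simp only [mem_setOf_eq, mem_empty_iff_false, iff_false, not_le]
          have h1 : ρ (Iio x) ≤ ρ univ := measure_mono (subset_univ _)
          have h2 : ρ (Iio x) < ENNReal.ofReal t := lt_of_le_of_lt h1 (not_le.mp hcase)
          have := ENNReal.toReal_lt_of_lt_ofReal h2
          exact this
        rw [hset]
        simp
    calc ((j:ℝ≥0∞) + 2) * ∫⁻ x, ρ (Iio x) ^ (j+1) ∂ρ
        = ((j:ℝ≥0∞) + 2) * ∫⁻ t in Ioi (0:ℝ), ρ {a | t ≤ f a} * ENNReal.ofReal (g t) := by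
          rw [← layer, hLHS]
      _ ≤ ((j:ℝ≥0∞) + 2) * ∫⁻ t in Ioi (0:ℝ),
          (ENNReal.ofReal M' - ENNReal.ofReal t) * ENNReal.ofReal (g t) :=
          mul_le_mul_right hbound _
      _ = ((j:ℝ≥0∞) + 2) * ENNReal.ofReal (M'^(j+2) / ((j:ℝ)+2)) := by
          rw [betaCalc ENNReal.toReal_nonneg j]
      _ = ENNReal.ofReal (M' ^ (j+2)) := by
          rw [show ((j:ℝ≥0∞) + 2) = ENNReal.ofReal ((j:ℝ)+2) by
            rw [ENNReal.ofReal_add (by positivity) (by norm_num)]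
            simp [ENNReal.ofReal_natCast], ← ENNReal.ofReal_mul (by positivity)]
          congr 1
          have : ((j:ℝ)+2) ≠ 0 := by positivity
          field_simp
      _ = ρ univ ^ (j+2) := by rw [ENNReal.ofReal_pow ENNReal.toReal_nonneg, hM]


private lemma swap_lemma (m : Measure ℝ) [IsFiniteMeasure m] {u v : ℝ → ℝ≥0∞}
    (hu : Measurable u) (hv : Measurable v) {R : Set (ℝ × ℝ)} (hR : MeasurableSet R) :
    ∫⁻ x, u x * ∫⁻ y, v y * R.indicator 1 (x, y) ∂m ∂m
      = ∫⁻ y, v y * ∫⁻ x, u x * R.indicator 1 (x, y) ∂m ∂m := by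
  have hind : Measurable (R.indicator (1 : ℝ × ℝ → ℝ≥0∞)) := measurable_one.indicator hR
  have hmeas : Measurable fun p : ℝ × ℝ => u p.1 * (v p.2 * R.indicator 1 p) :=
    (hu.comp measurable_fst).mul ((hv.comp measurable_snd).mul hind)
  calc ∫⁻ x, u x * ∫⁻ y, v y * R.indicator 1 (x, y) ∂m ∂m
      = ∫⁻ x, ∫⁻ y, u x * (v y * R.indicator 1 (x, y)) ∂m ∂m := by
        apply lintegral_congr; intro x
        exact (lintegral_const_mul (u x) (show Measurable fun y => v y * R.indicator 1 (x, y)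
          from hv.mul (hind.comp measurable_prodMk_left))).symm
    _ = ∫⁻ y, ∫⁻ x, u x * (v y * R.indicator 1 (x, y)) ∂m ∂m :=
        lintegral_lintegral_swap hmeas.aemeasurable
    _ = ∫⁻ y, v y * ∫⁻ x, u x * R.indicator 1 (x, y) ∂m ∂m := by
        apply lintegral_congr; intro y
        have h : ∀ x, u x * (v y * R.indicator 1 (x, y))
            = v y * (u x * R.indicator 1 (x, y)) := fun x => by ring
        simp_rw [h]
        exact lintegral_const_mul (v y) (show Measurable fun x => u x * R.indicator 1 (x, y)
          from hu.mul (hind.comp measurable_prodMk_right))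

private lemma regional_swap (m : Measure ℝ) [IsFiniteMeasure m] {u v : ℝ → ℝ≥0∞}
    (hu : Measurable u) (hv : Measurable v) {s s' : Set ℝ} {t t' : ℝ → Set ℝ}
    (hs : MeasurableSet s) (hs' : MeasurableSet s')
    {R : Set (ℝ × ℝ)} (hR : MeasurableSet R)
    (hR1 : ∀ x y, (x, y) ∈ R ↔ x ∈ s ∧ y ∈ t x)
    (hR2 : ∀ x y, (x, y) ∈ R ↔ y ∈ s' ∧ x ∈ t' y)
    (htm : ∀ x, MeasurableSet (t x)) (ht'm : ∀ y, MeasurableSet (t' y)) :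
    ∫⁻ x in s, u x * ∫⁻ y in t x, v y ∂m ∂m
      = ∫⁻ y in s', v y * ∫⁻ x in t' y, u x ∂m ∂m := by
  have left : ∫⁻ x in s, u x * ∫⁻ y in t x, v y ∂m ∂m
      = ∫⁻ x, u x * ∫⁻ y, v y * R.indicator 1 (x, y) ∂m ∂m := by
    rw [← lintegral_indicator hs]
    apply lintegral_congr; intro x
    by_cases hx : x ∈ s
    · rw [indicator_of_mem hx]
      congr 1
      rw [← lintegral_indicator (htm x)]
      apply lintegral_congr; intro y
      by_cases hy : y ∈ t x
      · rw [indicator_of_mem hy, indicator_of_mem ((hR1 x y).mpr ⟨hx, hy⟩), Pi.one_apply,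
          mul_one]
      · rw [indicator_of_notMem hy,
          indicator_of_notMem (fun h => hy (((hR1 x y).mp h).2)), mul_zero]
    · rw [indicator_of_notMem hx]
      have h : ∀ y, v y * R.indicator 1 (x, y) = 0 := fun y => by
        rw [indicator_of_notMem (fun h => hx (((hR1 x y).mp h).1)), mul_zero]
      simp_rw [h, lintegral_zero, mul_zero]
  have right : ∫⁻ y in s', v y * ∫⁻ x in t' y, u x ∂m ∂m
      = ∫⁻ y, v y * ∫⁻ x, u x * R.indicator 1 (x, y) ∂m ∂m := by
    rw [← lintegral_indicator hs']
    apply lintegral_congr; intro y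
    by_cases hy : y ∈ s'
    · rw [indicator_of_mem hy]
      congr 1
      rw [← lintegral_indicator (ht'm y)]
      apply lintegral_congr; intro x
      by_cases hx : x ∈ t' y
      · rw [indicator_of_mem hx, indicator_of_mem ((hR2 x y).mpr ⟨hy, hx⟩), Pi.one_apply,
          mul_one]
      · rw [indicator_of_notMem hx,
          indicator_of_notMem (fun h => hx (((hR2 x y).mp h).2)), mul_zero]
    · rw [indicator_of_notMem hy]
      have h : ∀ x, u x * R.indicator 1 (x, y) = 0 := fun x => by
        rw [indicator_of_notMem (fun h => hy (((hR2 x y).mp h).1)), mul_zero]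
      simp_rw [h, lintegral_zero, mul_zero]
  rw [left, right, swap_lemma m hu hv hR]

private lemma lemU (m : Measure ℝ) [IsFiniteMeasure m] {φ : ℝ → ℝ≥0∞}
    (hφm : Measurable φ) (hφmono : Monotone φ) (hφfin : ∀ x, φ x ≠ ∞)
    {a : ℝ} {β : ℝ≥0∞} (hβ : ∀ z, a ≤ z → φ z * m (Ici z) ≤ β)
    {I : Set ℝ} (hI : MeasurableSet I) (hIa : I ⊆ Ici a) :
    ∀ j : ℕ, ∫⁻ x in I, (m.withDensity φ) (I ∩ Iic x) ^ j ∂m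
      ≤ (j.factorial : ℝ≥0∞) * β ^ j * m I := by
  set μ := m.withDensity φ with hμ
  have hμapp : ∀ s : Set ℝ, MeasurableSet s → μ s = ∫⁻ z in s, φ z ∂m := fun s hs =>
    withDensity_apply φ hs
  have hμfin : ∀ c : ℝ, μ (I ∩ Iic c) ≠ ∞ := by
    intro c
    rw [hμapp _ (hI.inter measurableSet_Iic)]
    have h1 : ∫⁻ z in I ∩ Iic c, φ z ∂m ≤ ∫⁻ _ in I ∩ Iic c, φ c ∂m :=
      setLIntegral_mono measurable_const (fun z hz => hφmono hz.2)
    rw [setLIntegral_const] at h1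
    exact ne_top_of_le_ne_top (ENNReal.mul_ne_top (hφfin c) (measure_ne_top m _)) h1
  have hWmono : Monotone fun x : ℝ => μ (I ∩ Iic x) := fun x y hxy =>
    measure_mono (inter_subset_inter_right _ (Iic_subset_Iic.mpr hxy))
  have hWmeas : Measurable fun x : ℝ => μ (I ∩ Iic x) := hWmono.measurable
  intro j
  induction j with
  | zero => simp
  | succ j ih =>
    -- pointwise simplex bound from lemA
    have key : ∀ x ∈ I, μ (I ∩ Iic x) ^ (j+1)
        ≤ ((j:ℝ≥0∞)+1) * ∫⁻ z in I ∩ Iic x, μ (I ∩ Iic z) ^ j * φ z ∂m := by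
      intro x hx
      set s := I ∩ Iic x with hs
      have hsm : MeasurableSet s := hI.inter measurableSet_Iic
      haveI : IsFiniteMeasure (μ.restrict s) := ⟨by
        rw [Measure.restrict_apply_univ]
        exact lt_top_iff_ne_top.mpr (hμfin x)⟩
      have h1 := lemA (μ.restrict s) j
      rw [Measure.restrict_apply_univ] at h1
      refine le_trans h1 ?_
      apply mul_le_mul_right
      have e1 : ∫⁻ z, (μ.restrict s) (Iic z) ^ j ∂(μ.restrict s)
          = ∫⁻ z in s, μ (I ∩ Iic z) ^ j ∂μ := by
        apply setLIntegral_congr_fun_ae hsm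
        apply ae_of_all
        intro z hz
        rw [Measure.restrict_apply measurableSet_Iic]
        congr 2
        ext w
        simp only [mem_inter_iff, mem_Iic]
        constructor
        · rintro ⟨hw1, hw2, _⟩; exact ⟨hw2, hw1⟩
        · rintro ⟨hw1, hw2⟩; exact ⟨hw2, hw1, le_trans hw2 hz.2⟩
      rw [e1, hμ, restrict_withDensity hsm,
        lintegral_withDensity_eq_lintegral_mul _ hφm (hWmeas.pow_const j)]
      apply le_of_eq
      apply lintegral_congr
      intro z
      simp [mul_comm, hμ]
    -- integrate, swap, use hβ and ih
    set W : ℝ → ℝ≥0∞ := fun z => μ (I ∩ Iic z) ^ j * φ z with hW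
    have hWm : Measurable W := (hWmeas.pow_const j).mul hφm
    have hinner_mono : Monotone fun x : ℝ => ∫⁻ z in I ∩ Iic x, W z ∂m := by
      intro x y hxy
      exact lintegral_mono' (Measure.restrict_mono
        (inter_subset_inter_right _ (Iic_subset_Iic.mpr hxy)) le_rfl) le_rfl
    calc ∫⁻ x in I, μ (I ∩ Iic x) ^ (j+1) ∂m
        ≤ ∫⁻ x in I, ((j:ℝ≥0∞)+1) * ∫⁻ z in I ∩ Iic x, W z ∂m ∂m :=
          setLIntegral_mono (measurable_const.mul hinner_mono.measurable) key
      _ = ((j:ℝ≥0∞)+1) * ∫⁻ x in I, (fun _ => (1:ℝ≥0∞)) x * ∫⁻ z in I ∩ Iic x, W z ∂m ∂m := by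
          rw [lintegral_const_mul ((j:ℝ≥0∞)+1) hinner_mono.measurable]
          congr 1
          apply lintegral_congr; intro x; rw [one_mul]
      _ = ((j:ℝ≥0∞)+1) * ∫⁻ z in I, W z * ∫⁻ x in I ∩ Ici z, (fun _ => (1:ℝ≥0∞)) x ∂m ∂m := by
          congr 1
          refine regional_swap m measurable_const hWm hI hI
            (MeasurableSet.inter (MeasurableSet.inter (hI.preimage measurable_fst)
              (hI.preimage measurable_snd)) (measurableSet_le measurable_snd measurable_fst))
            (R := {p : ℝ × ℝ | (p.1 ∈ I ∧ p.2 ∈ I) ∧ p.2 ≤ p.1}) ?_ ?_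
            (fun x => hI.inter measurableSet_Iic) (fun z => hI.inter measurableSet_Ici)
          · intro x y
            simp only [mem_setOf_eq, mem_inter_iff, mem_Iic]
            tauto
          · intro x y
            simp only [mem_setOf_eq, mem_inter_iff, mem_Ici]
            tauto
      _ ≤ ((j:ℝ≥0∞)+1) * ∫⁻ z in I, μ (I ∩ Iic z) ^ j * β ∂m := by
          apply mul_le_mul_right
          apply setLIntegral_mono ((hWmeas.pow_const j).mul measurable_const)
          intro z hz
          rw [setLIntegral_one]
          have h2 : φ z * m (I ∩ Ici z) ≤ β := by
            refine le_trans (mul_le_mul_right (measure_mono inter_subset_right) _) ?_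
            exact hβ z (hIa hz)
          calc W z * m (I ∩ Ici z) = μ (I ∩ Iic z) ^ j * (φ z * m (I ∩ Ici z)) := by
                rw [hW]; ring
            _ ≤ μ (I ∩ Iic z) ^ j * β := mul_le_mul_right h2 _
      _ = ((j:ℝ≥0∞)+1) * β * ∫⁻ z in I, μ (I ∩ Iic z) ^ j ∂m := by
          rw [mul_assoc]
          congr 1
          rw [← lintegral_const_mul β (hWmeas.pow_const j)]
          apply lintegral_congr; intro z; rw [mul_comm]
      _ ≤ ((j:ℝ≥0∞)+1) * β * ((j.factorial : ℝ≥0∞) * β ^ j * m I) := mul_le_mul_right ih _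
      _ = ((j+1).factorial : ℝ≥0∞) * β ^ (j+1) * m I := by
          rw [Nat.factorial_succ]
          push_cast
          ring

private lemma muFin (m : Measure ℝ) [IsFiniteMeasure m] {φ : ℝ → ℝ≥0∞}
    (hφmono : Monotone φ) (hφfin : ∀ x, φ x ≠ ∞)
    {s : Set ℝ} (hs : MeasurableSet s) {c : ℝ} (hsc : s ⊆ Iic c) :
    (m.withDensity φ) s ≠ ∞ := by
  rw [withDensity_apply φ hs]
  have h1 : ∫⁻ z in s, φ z ∂m ≤ ∫⁻ _ in s, φ c ∂m :=
    setLIntegral_mono measurable_const (fun z hz => hφmono (hsc hz))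
  rw [setLIntegral_const] at h1
  exact ne_top_of_le_ne_top (ENNReal.mul_ne_top (hφfin c) (measure_ne_top m _)) h1

private lemma lemL1 (m : Measure ℝ) [IsFiniteMeasure m] {φ : ℝ → ℝ≥0∞}
    (hφm : Measurable φ) (hφmono : Monotone φ) (hφfin : ∀ x, φ x ≠ ∞)
    (a y : ℝ) (k : ℕ) :
    ((k:ℝ≥0∞)+1) * ∫⁻ x in Ioo a y, (m.withDensity φ) (Ioo a x) ^ k * φ x ∂m
      ≤ (m.withDensity φ) (Ioo a y) ^ (k+1) := by
  set μ := m.withDensity φ with hμ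
  haveI : IsFiniteMeasure (μ.restrict (Ioo a y)) := ⟨by
    rw [Measure.restrict_apply_univ]
    exact lt_top_iff_ne_top.mpr (muFin m hφmono hφfin measurableSet_Ioo
      (fun z hz => le_of_lt hz.2 : Ioo a y ⊆ Iic y))⟩
  have h1 := lemB (μ.restrict (Ioo a y)) k
  rw [Measure.restrict_apply_univ] at h1
  refine le_trans (le_of_eq ?_) h1
  congr 1
  have e1 : ∫⁻ x, (μ.restrict (Ioo a y)) (Iio x) ^ k ∂(μ.restrict (Ioo a y))
      = ∫⁻ x in Ioo a y, μ (Ioo a x) ^ k ∂μ := by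
    apply setLIntegral_congr_fun_ae measurableSet_Ioo
    apply ae_of_all
    intro x hx
    rw [Measure.restrict_apply measurableSet_Iio]
    congr 2
    ext w
    simp only [mem_inter_iff, mem_Iio, mem_Ioo]
    constructor
    · rintro ⟨hw1, hw2, _⟩; exact ⟨hw2, hw1⟩
    · rintro ⟨hw1, hw2⟩; exact ⟨hw2, hw1, lt_of_lt_of_le hw2 hx.2.le⟩
  have hΦmono : Monotone fun x => (m.withDensity φ) (Ioo a x) := fun x y hxy =>
    measure_mono (Ioo_subset_Ioo_right hxy)
  rw [e1, hμ, restrict_withDensity measurableSet_Ioo,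
    lintegral_withDensity_eq_lintegral_mul _ hφm (hΦmono.measurable.pow_const k)]
  apply lintegral_congr
  intro x
  simp [mul_comm]

/-- If `m((x,∞))·(S(x) − S(a)) ≤ B` for all `x ≥ a`, then for every
`n ≥ 0`, `∫_{(a,∞)} (J + K)ⁿ1(x) dm(x) ≤ 4ⁿ·Bⁿ·m((a,∞))`. -/
theorem integral_iterate_JplusK_le
    (S : ℝ → ℝ) (hScont : Continuous S) (hSmono : StrictMono S)
    (m : Measure ℝ) [IsFiniteMeasure m]
    (a B : ℝ)
    (hB : ∀ x : ℝ, a ≤ x → m (Ioi x) * ENNReal.ofReal (S x - S a) ≤ ENNReal.ofReal B) :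
    ∀ n : ℕ,
      ∫⁻ x in Ioi a, (fun g y => Jop S m a g y + Kop S m a g y)^[n] (fun _ => 1) x ∂m ≤
        4 ^ n * ENNReal.ofReal B ^ n * m (Ioi a) := by
  set β : ℝ≥0∞ := ENNReal.ofReal B with hβdef
  set φ : ℝ → ℝ≥0∞ := fun x => ENNReal.ofReal (S x - S a) with hφdef
  have hφm : Measurable φ := ((hScont.sub continuous_const).measurable).ennreal_ofReal
  have hφmono : Monotone φ := fun x y h =>
    ENNReal.ofReal_le_ofReal (by have := hSmono.monotone h; linarith)
  have hφfin : ∀ x, φ x ≠ ∞ := fun x => ENNReal.ofReal_ne_top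
  set μ : Measure ℝ := m.withDensity φ with hμdef
  set Φ : ℝ → ℝ≥0∞ := fun x => μ (Ioo a x) with hΦdef
  have hΦmono : Monotone Φ := fun x y hxy => measure_mono (Ioo_subset_Ioo_right hxy)
  have hΦmeas : Measurable Φ := hΦmono.measurable
  -- the key pointwise hypothesis, upgraded to closed rays by continuity
  have hβ : ∀ z, a ≤ z → φ z * m (Ici z) ≤ β := by
    intro z hz
    rcases eq_or_lt_of_le hz with h | h
    · have : φ z = 0 := by rw [hφdef, ← h]; simp
      rw [this, zero_mul]; exact zero_le
    · set x : ℕ → ℝ := fun n => z - (z - a)/(n+1) with hx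
      have hxa : ∀ n : ℕ, a ≤ x n := by
        intro n
        rw [hx]
        have h1 : (z - a)/((n:ℝ)+1) ≤ z - a := by
          apply div_le_self (by linarith)
          have : (0:ℝ) ≤ (n:ℝ) := Nat.cast_nonneg n
          linarith
        simp only
        linarith
      have hxz : ∀ n : ℕ, x n < z := by
        intro n
        rw [hx]
        have h1 : (0:ℝ) < (z - a)/((n:ℝ)+1) := by
          apply div_pos (by linarith)
          have : (0:ℝ) ≤ (n:ℝ) := Nat.cast_nonneg n
          linarith
        simp only
        linarith
      have hbound : ∀ n : ℕ, φ (x n) * m (Ici z) ≤ β := by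
        intro n
        calc φ (x n) * m (Ici z) ≤ φ (x n) * m (Ioi (x n)) :=
              mul_le_mul_right (measure_mono (fun w hw => lt_of_lt_of_le (hxz n) hw)) _
          _ = m (Ioi (x n)) * φ (x n) := mul_comm _ _
          _ ≤ β := hB (x n) (hxa n)
      have htend : Filter.Tendsto (fun n : ℕ => φ (x n)) Filter.atTop (nhds (φ z)) := by
        have hxt : Filter.Tendsto x Filter.atTop (nhds z) := by
          rw [hx]
          have h0 : Filter.Tendsto (fun n : ℕ => (z - a) * (1/((n:ℝ)+1)))
              Filter.atTop (nhds ((z - a) * 0)) :=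
            tendsto_one_div_add_atTop_nhds_zero_nat.const_mul _
          have h1 : Filter.Tendsto (fun n : ℕ => z - (z - a) * (1/((n:ℝ)+1)))
              Filter.atTop (nhds (z - (z - a) * 0)) := (tendsto_const_nhds).sub h0
          simp only [mul_zero, sub_zero] at h1
          convert h1 using 2 with n
          ring
        have hφc : Continuous φ := ENNReal.continuous_ofReal.comp (hScont.sub continuous_const)
        exact (hφc.tendsto z).comp hxt
      have h2 : Filter.Tendsto (fun n : ℕ => φ (x n) * m (Ici z)) Filter.atTop
          (nhds (φ z * m (Ici z))) :=
        ENNReal.Tendsto.mul_const htend (Or.inr (measure_ne_top m _))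
      exact le_of_tendsto h2 (Filter.Eventually.of_forall hbound)
  -- geometric sum bound
  have geom_two_le : ∀ K : ℕ, (∑ i ∈ Finset.range (K+1), (2:ℝ≥0∞)^i) ≤ 2^(K+1) := by
    intro K
    induction K with
    | zero => simp
    | succ K ih =>
      rw [Finset.sum_range_succ]
      calc (∑ i ∈ Finset.range (K+1), (2:ℝ≥0∞)^i) + 2^(K+1)
          ≤ 2^(K+1) + 2^(K+1) := add_le_add_left ih _
        _ = 2^(K+2) := by ring
  set T : (ℝ → ℝ≥0∞) → ℝ → ℝ≥0∞ := fun g y => Jop S m a g y + Kop S m a g y with hT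
  have hJopm : ∀ f : ℝ → ℝ≥0∞, Measurable (Jop S m a f) := by
    intro f
    have hanti : Antitone fun x => ∫⁻ y in Ioi x, f y ∂m := fun x y hxy =>
      lintegral_mono' (Measure.restrict_mono (Ioi_subset_Ioi hxy) le_rfl) le_rfl
    exact hφm.mul hanti.measurable
  have hKopm : ∀ f : ℝ → ℝ≥0∞, Measurable (Kop S m a f) := by
    intro f
    have hmono : Monotone fun x => ∫⁻ y in Ioc a x, ENNReal.ofReal (S y - S a) * f y ∂m :=
      fun x y hxy => lintegral_mono' (Measure.restrict_mono (Ioc_subset_Ioc_right hxy) le_rfl)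
        le_rfl
    exact hmono.measurable
  have hgmeas : ∀ n : ℕ, Measurable (T^[n] (fun _ => (1:ℝ≥0∞))) := by
    intro n
    induction n with
    | zero => simpa using measurable_const
    | succ n ih =>
      rw [Function.iterate_succ_apply']
      exact (hJopm _).add (hKopm _)
  have main : ∀ n k : ℕ, ∫⁻ x in Ioi a, Φ x ^ k * (T^[n] (fun _ => 1)) x ∂m
      ≤ 4 ^ n * 2 ^ k * (k.factorial : ℝ≥0∞) * β ^ (n + k) * m (Ioi a) := by
    intro n
    induction n with
    | zero =>
      intro k
      simp only [Function.iterate_zero, id_eq, mul_one, pow_zero, one_mul, zero_add]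
      have h2 : ∫⁻ x in Ioi a, Φ x ^ k ∂m ≤ ∫⁻ x in Ioi a, μ (Ioi a ∩ Iic x) ^ k ∂m := by
        have hmono2 : Monotone fun x => μ (Ioi a ∩ Iic x) := fun x y hxy =>
          measure_mono (inter_subset_inter_right _ (Iic_subset_Iic.mpr hxy))
        apply setLIntegral_mono (hmono2.measurable.pow_const k)
        intro x hx
        apply pow_le_pow_left₀ zero_le
        apply measure_mono
        intro z hz
        exact ⟨hz.1, hz.2.le⟩
      refine le_trans h2 (le_trans
        (lemU m hφm hφmono hφfin hβ measurableSet_Ioi Ioi_subset_Ici_self k) ?_)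
      have h3 : (1:ℝ≥0∞) ≤ 2^k := one_le_pow_of_one_le' (by norm_num) k
      calc (k.factorial : ℝ≥0∞) * β ^ k * m (Ioi a)
          ≤ 2^k * ((k.factorial : ℝ≥0∞) * β ^ k * m (Ioi a)) :=
            le_mul_of_one_le_left (zero_le) h3
        _ = 2^k * (k.factorial : ℝ≥0∞) * β ^ k * m (Ioi a) := by ring
    | succ n ihn =>
      intro k
      have hgsucc : T^[n+1] (fun _ => (1:ℝ≥0∞)) = T (T^[n] (fun _ => 1)) :=
        Function.iterate_succ_apply' T n _
      set g : ℝ → ℝ≥0∞ := T^[n] (fun _ => 1) with hgdef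
      have hgm : Measurable g := hgmeas n
      have hsplit : ∫⁻ x in Ioi a, Φ x ^ k * (T^[n+1] (fun _ => 1)) x ∂m
          = (∫⁻ x in Ioi a, Φ x ^ k * Jop S m a g x ∂m)
            + ∫⁻ x in Ioi a, Φ x ^ k * Kop S m a g x ∂m := by
        rw [hgsucc]
        have e : ∀ x, Φ x ^ k * (T g) x
            = Φ x ^ k * Jop S m a g x + Φ x ^ k * Kop S m a g x := by
          intro x; rw [hT]; ring
        simp_rw [e]
        exact lintegral_add_left ((hΦmeas.pow_const k).mul (hJopm g)) _
      -- ===================== J part =====================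
      have hJswap : ∫⁻ x in Ioi a, Φ x ^ k * Jop S m a g x ∂m
          = ∫⁻ y in Ioi a, g y * ∫⁻ x in Ioo a y, (Φ x ^ k * φ x) ∂m ∂m := by
        have e1 : ∀ x, Φ x ^ k * Jop S m a g x
            = (Φ x ^ k * φ x) * ∫⁻ y in Ioi x, g y ∂m := by
          intro x; simp only [Jop]; rw [hφdef]; ring
        simp_rw [e1]
        refine regional_swap m ((hΦmeas.pow_const k).mul hφm) hgm measurableSet_Ioi
          measurableSet_Ioi (R := {p : ℝ × ℝ | a < p.1 ∧ p.1 < p.2}) ?_ ?_ ?_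
          (fun x => measurableSet_Ioi) (fun y => measurableSet_Ioo)
        · exact (measurableSet_lt measurable_const measurable_fst).inter
            (measurableSet_lt measurable_fst measurable_snd)
        · intro x y
          simp only [mem_setOf_eq, mem_Ioi]
        · intro x y
          simp only [mem_setOf_eq, mem_Ioi, mem_Ioo]
          constructor
          · rintro ⟨h1, h2⟩; exact ⟨lt_trans h1 h2, h1, h2⟩
          · rintro ⟨h1, h2, h3⟩; exact ⟨h2, h3⟩
      have hJbound : ((k:ℝ≥0∞)+1) * ∫⁻ x in Ioi a, Φ x ^ k * Jop S m a g x ∂m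
          ≤ ∫⁻ y in Ioi a, Φ y ^ (k+1) * g y ∂m := by
        rw [hJswap]
        have hinner_mono : Monotone fun y => ∫⁻ x in Ioo a y, (Φ x ^ k * φ x) ∂m :=
          fun x y hxy => lintegral_mono'
            (Measure.restrict_mono (Ioo_subset_Ioo_right hxy) le_rfl) le_rfl
        rw [← lintegral_const_mul _ (show Measurable fun y => g y * ∫⁻ x in Ioo a y, (Φ x ^ k * φ x) ∂m
          from hgm.mul hinner_mono.measurable)]
        apply setLIntegral_mono ((hΦmeas.pow_const (k+1)).mul hgm)
        intro y hy
        calc ((k:ℝ≥0∞)+1) * (g y * ∫⁻ x in Ioo a y, (Φ x ^ k * φ x) ∂m)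
            = g y * (((k:ℝ≥0∞)+1) * ∫⁻ x in Ioo a y, (Φ x ^ k * φ x) ∂m) := by ring
          _ ≤ g y * Φ y ^ (k+1) :=
              mul_le_mul_right (lemL1 m hφm hφmono hφfin a y k) _
          _ = Φ y ^ (k+1) * g y := mul_comm _ _
      -- ===================== K part =====================
      have hKswap : ∫⁻ x in Ioi a, Φ x ^ k * Kop S m a g x ∂m
          = ∫⁻ y in Ioi a, (φ y * g y) * ∫⁻ x in Ici y, Φ x ^ k ∂m ∂m := by
        have e1 : ∀ x, Φ x ^ k * Kop S m a g x
            = Φ x ^ k * ∫⁻ y in Ioc a x, (φ y * g y) ∂m := by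
          intro x; rfl
        simp_rw [e1]
        refine regional_swap m (hΦmeas.pow_const k) (hφm.mul hgm) measurableSet_Ioi
          measurableSet_Ioi (R := {p : ℝ × ℝ | a < p.2 ∧ p.2 ≤ p.1}) ?_ ?_ ?_
          (fun x => measurableSet_Ioc) (fun y => measurableSet_Ici)
        · exact (measurableSet_lt measurable_const measurable_snd).inter
            (measurableSet_le measurable_snd measurable_fst)
        · intro x y
          simp only [mem_setOf_eq, mem_Ioi, mem_Ioc]
          constructor
          · rintro ⟨h1, h2⟩; exact ⟨lt_of_lt_of_le h1 h2, h1, h2⟩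
          · rintro ⟨h1, h2, h3⟩; exact ⟨h2, h3⟩
        · intro x y
          simp only [mem_setOf_eq, mem_Ioi, mem_Ici]
      have hInner : ∀ y, a < y → ∫⁻ x in Ici y, Φ x ^ k ∂m
          ≤ ∑ i ∈ Finset.range (k+1),
              (Φ y ^ i * (k.choose i : ℝ≥0∞)) *
                (((k-i).factorial : ℝ≥0∞) * β ^ (k-i) * m (Ici y)) := by
        intro y hy
        have hDmono : Monotone fun x => μ (Ici y ∩ Iic x) := fun x x' h =>
          measure_mono (inter_subset_inter_right _ (Iic_subset_Iic.mpr h))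
        have hpt : ∀ x ∈ Ici y, Φ x ^ k
            ≤ ∑ i ∈ Finset.range (k+1),
                Φ y ^ i * μ (Ici y ∩ Iic x) ^ (k-i) * (k.choose i : ℝ≥0∞) := by
          intro x hx
          have h1 : Φ x ≤ Φ y + μ (Ici y ∩ Iic x) := by
            refine le_trans (measure_mono ?_) (measure_union_le _ _)
            intro z hz
            rcases lt_or_ge z y with h' | h'
            · exact Or.inl ⟨hz.1, h'⟩
            · exact Or.inr ⟨h', hz.2.le⟩
          calc Φ x ^ k ≤ (Φ y + μ (Ici y ∩ Iic x)) ^ k := pow_le_pow_left₀ zero_le h1 k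
            _ = ∑ i ∈ Finset.range (k+1),
                Φ y ^ i * μ (Ici y ∩ Iic x) ^ (k-i) * (k.choose i : ℝ≥0∞) := add_pow _ _ k
        calc ∫⁻ x in Ici y, Φ x ^ k ∂m
            ≤ ∫⁻ x in Ici y, ∑ i ∈ Finset.range (k+1),
                Φ y ^ i * μ (Ici y ∩ Iic x) ^ (k-i) * (k.choose i : ℝ≥0∞) ∂m := by
              apply setLIntegral_mono ?_ hpt
              exact Finset.measurable_sum _ (fun i _ =>
                (measurable_const.mul (hDmono.measurable.pow_const _)).mul measurable_const)
          _ = ∑ i ∈ Finset.range (k+1), ∫⁻ x in Ici y,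
                Φ y ^ i * μ (Ici y ∩ Iic x) ^ (k-i) * (k.choose i : ℝ≥0∞) ∂m :=
              lintegral_finset_sum _ (fun i _ =>
                (measurable_const.mul (hDmono.measurable.pow_const _)).mul measurable_const)
          _ ≤ ∑ i ∈ Finset.range (k+1),
                (Φ y ^ i * (k.choose i : ℝ≥0∞)) *
                  (((k-i).factorial : ℝ≥0∞) * β ^ (k-i) * m (Ici y)) := by
              apply Finset.sum_le_sum
              intro i hi
              have e2 : ∀ x, Φ y ^ i * μ (Ici y ∩ Iic x) ^ (k-i) * (k.choose i : ℝ≥0∞)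
                  = (Φ y ^ i * (k.choose i : ℝ≥0∞)) * μ (Ici y ∩ Iic x) ^ (k-i) := by
                intro x; ring
              simp_rw [e2]
              rw [lintegral_const_mul _ (hDmono.measurable.pow_const _)]
              exact mul_le_mul_right (lemU m hφm hφmono hφfin hβ measurableSet_Ici
                (Ici_subset_Ici.mpr hy.le) (k-i)) _
      have hKbound : ∫⁻ x in Ioi a, Φ x ^ k * Kop S m a g x ∂m
          ≤ ∑ i ∈ Finset.range (k+1),
              ((k.choose i : ℝ≥0∞) * ((k-i).factorial : ℝ≥0∞) * β ^ (k-i+1)) *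
                ∫⁻ y in Ioi a, Φ y ^ i * g y ∂m := by
        rw [hKswap]
        have hmeas_sum : Measurable fun y => ∑ i ∈ Finset.range (k+1),
            ((k.choose i : ℝ≥0∞) * ((k-i).factorial : ℝ≥0∞) * β ^ (k-i+1)) *
              (Φ y ^ i * g y) :=
          Finset.measurable_sum _ (fun i _ =>
            measurable_const.mul ((hΦmeas.pow_const i).mul hgm))
        calc ∫⁻ y in Ioi a, (φ y * g y) * ∫⁻ x in Ici y, Φ x ^ k ∂m ∂m
            ≤ ∫⁻ y in Ioi a, ∑ i ∈ Finset.range (k+1),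
                ((k.choose i : ℝ≥0∞) * ((k-i).factorial : ℝ≥0∞) * β ^ (k-i+1)) *
                  (Φ y ^ i * g y) ∂m := by
              apply setLIntegral_mono hmeas_sum
              intro y hy
              calc (φ y * g y) * ∫⁻ x in Ici y, Φ x ^ k ∂m
                  ≤ (φ y * g y) * ∑ i ∈ Finset.range (k+1),
                      (Φ y ^ i * (k.choose i : ℝ≥0∞)) *
                        (((k-i).factorial : ℝ≥0∞) * β ^ (k-i) * m (Ici y)) :=
                    mul_le_mul_right (hInner y hy) _
                _ = ∑ i ∈ Finset.range (k+1),
                      ((k.choose i : ℝ≥0∞) * ((k-i).factorial : ℝ≥0∞) * β ^ (k-i)) *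
                        (Φ y ^ i * g y) * (φ y * m (Ici y)) := by
                    rw [Finset.mul_sum]
                    apply Finset.sum_congr rfl
                    intro i hi
                    ring
                _ ≤ ∑ i ∈ Finset.range (k+1),
                      ((k.choose i : ℝ≥0∞) * ((k-i).factorial : ℝ≥0∞) * β ^ (k-i+1)) *
                        (Φ y ^ i * g y) := by
                    apply Finset.sum_le_sum
                    intro i hi
                    calc ((k.choose i : ℝ≥0∞) * ((k-i).factorial : ℝ≥0∞) * β ^ (k-i)) *
                          (Φ y ^ i * g y) * (φ y * m (Ici y))
                        ≤ ((k.choose i : ℝ≥0∞) * ((k-i).factorial : ℝ≥0∞) * β ^ (k-i)) *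
                          (Φ y ^ i * g y) * β := mul_le_mul_right (hβ y hy.le) _
                      _ = ((k.choose i : ℝ≥0∞) * ((k-i).factorial : ℝ≥0∞) * β ^ (k-i+1)) *
                          (Φ y ^ i * g y) := by rw [pow_succ]; ring
          _ = ∑ i ∈ Finset.range (k+1),
                ((k.choose i : ℝ≥0∞) * ((k-i).factorial : ℝ≥0∞) * β ^ (k-i+1)) *
                  ∫⁻ y in Ioi a, Φ y ^ i * g y ∂m := by
              rw [lintegral_finset_sum (f := fun i y =>
                ((k.choose i : ℝ≥0∞) * ((k-i).factorial : ℝ≥0∞) * β ^ (k-i+1)) * (Φ y ^ i * g y))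
                _ (fun i _ =>
                measurable_const.mul ((hΦmeas.pow_const i).mul hgm))]
              apply Finset.sum_congr rfl
              intro i hi
              rw [lintegral_const_mul _ (show Measurable fun y => Φ y ^ i * g y from (hΦmeas.pow_const i).mul hgm)]
      -- ===================== combine =====================
      have hJfinal : ∫⁻ x in Ioi a, Φ x ^ k * Jop S m a g x ∂m
          ≤ 4 ^ n * 2 ^ (k+1) * (k.factorial : ℝ≥0∞) * β ^ (n+1+k) * m (Ioi a) := by
        have h1 : ((k:ℝ≥0∞)+1) * ∫⁻ x in Ioi a, Φ x ^ k * Jop S m a g x ∂m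
            ≤ ((k:ℝ≥0∞)+1) *
              (4 ^ n * 2 ^ (k+1) * (k.factorial : ℝ≥0∞) * β ^ (n+1+k) * m (Ioi a)) := by
          refine le_trans hJbound (le_trans (ihn (k+1)) (le_of_eq ?_))
          have hfc : (((k+1).factorial : ℕ) : ℝ≥0∞) = ((k:ℝ≥0∞)+1) * (k.factorial : ℝ≥0∞) := by
            rw [Nat.factorial_succ]
            push_cast
            ring
          rw [hfc]
          have hexp : n + (k+1) = n+1+k := by omega
          rw [hexp]
          ring
        exact (ENNReal.mul_le_mul_iff_right (by simp : ((k:ℝ≥0∞)+1) ≠ 0)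
          (by simp : ((k:ℝ≥0∞)+1) ≠ ⊤)).mp h1
      have hKfinal : ∫⁻ x in Ioi a, Φ x ^ k * Kop S m a g x ∂m
          ≤ 4 ^ n * 2 ^ (k+1) * (k.factorial : ℝ≥0∞) * β ^ (n+1+k) * m (Ioi a) := by
        refine le_trans hKbound ?_
        have hterm : ∀ i ∈ Finset.range (k+1),
            ((k.choose i : ℝ≥0∞) * ((k-i).factorial : ℝ≥0∞) * β ^ (k-i+1)) *
              ∫⁻ y in Ioi a, Φ y ^ i * g y ∂m
            ≤ (k.factorial : ℝ≥0∞) * 2 ^ i * (4 ^ n * β ^ (n+1+k) * m (Ioi a)) := by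
          intro i hi
          have hik : i ≤ k := Nat.lt_succ_iff.mp (Finset.mem_range.mp hi)
          refine le_trans (mul_le_mul_right (ihn i) _) (le_of_eq ?_)
          have hfact : (k.choose i : ℝ≥0∞) * ((k-i).factorial : ℝ≥0∞) *
              (i.factorial : ℝ≥0∞) = (k.factorial : ℝ≥0∞) := by
            have := Nat.choose_mul_factorial_mul_factorial hik
            calc (k.choose i : ℝ≥0∞) * ((k-i).factorial : ℝ≥0∞) * (i.factorial : ℝ≥0∞)
                = ((k.choose i * (k-i).factorial * i.factorial : ℕ) : ℝ≥0∞) := by push_cast; ring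
              _ = (k.factorial : ℝ≥0∞) := by
                  congr 1
                  calc k.choose i * (k-i).factorial * i.factorial
                      = k.choose i * i.factorial * (k-i).factorial := by ring
                    _ = k.factorial := this
          have hpow : β ^ (k-i+1) * β ^ (n+i) = β ^ (n+1+k) := by
            rw [← pow_add]
            congr 1
            omega
          calc ((k.choose i : ℝ≥0∞) * ((k-i).factorial : ℝ≥0∞) * β ^ (k-i+1)) *
                (4 ^ n * 2 ^ i * (i.factorial : ℝ≥0∞) * β ^ (n+i) * m (Ioi a))
              = ((k.choose i : ℝ≥0∞) * ((k-i).factorial : ℝ≥0∞) * (i.factorial : ℝ≥0∞)) *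
                2 ^ i * (β ^ (k-i+1) * β ^ (n+i)) * 4 ^ n * m (Ioi a) := by ring
            _ = (k.factorial : ℝ≥0∞) * 2 ^ i * (4 ^ n * β ^ (n+1+k) * m (Ioi a)) := by
                rw [hfact, hpow]; ring
        refine le_trans (Finset.sum_le_sum hterm) ?_
        rw [← Finset.sum_mul, ← Finset.mul_sum]
        calc (k.factorial : ℝ≥0∞) * (∑ i ∈ Finset.range (k+1), (2:ℝ≥0∞) ^ i) *
              (4 ^ n * β ^ (n+1+k) * m (Ioi a))
            ≤ (k.factorial : ℝ≥0∞) * 2 ^ (k+1) * (4 ^ n * β ^ (n+1+k) * m (Ioi a)) :=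
              mul_le_mul_left (mul_le_mul_right (geom_two_le k) _) _
          _ = 4 ^ n * 2 ^ (k+1) * (k.factorial : ℝ≥0∞) * β ^ (n+1+k) * m (Ioi a) := by ring
      rw [hsplit]
      calc (∫⁻ x in Ioi a, Φ x ^ k * Jop S m a g x ∂m)
            + ∫⁻ x in Ioi a, Φ x ^ k * Kop S m a g x ∂m
          ≤ (4 ^ n * 2 ^ (k+1) * (k.factorial : ℝ≥0∞) * β ^ (n+1+k) * m (Ioi a))
            + 4 ^ n * 2 ^ (k+1) * (k.factorial : ℝ≥0∞) * β ^ (n+1+k) * m (Ioi a) :=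
            add_le_add hJfinal hKfinal
        _ = 4 ^ (n+1) * 2 ^ k * (k.factorial : ℝ≥0∞) * β ^ (n+1+k) * m (Ioi a) := by ring
  intro n
  have h := main n 0
  simp only [pow_zero, one_mul, Nat.factorial_zero, Nat.cast_one, mul_one, add_zero] at h
  exact h
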